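/- Let n be a positive natural number and let A : Fin 3 → Matrix (Fin n) (Fin n) ℂ and B : Fin 6 → Matrix (Fin n) (Fin n) ℂ be families of Hermitian matrices satisfying (A x)² = 1 and (B y)² = 1 for all x, y, and commuting across the two sides: A x * B y = B y * A x for all x, y. Then the Bowles Bell operator 𝔅 = A1*B1 + A1*B2 + A2*B1 − A2*B2 + A1*B3 + A1*B4 − A3*B3 + A3*B4 + A2*B5 + A2*B6 − A3*B5 + A3*B6 (indices 1..3, 1..6) satisfies the Tsirelson-type bound 𝔅 ⪯ (6·√2)·1, i.e. (6·√2)·1 − 𝔅 is positive semidefinite. Hence the quantum maximum of the Bowles Bell inequality is at most 6√2. -/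

import Mathlib

open Matrix BigOperators ComplexOrder

lemma herm_smul_aux {n : ℕ} {M : Matrix (Fin n) (Fin n) ℂ} (h : M.IsHermitian)
    (r : ℝ) : ((r : ℂ) • M).IsHermitian := by
  unfold Matrix.IsHermitian
  rw [Matrix.conjTranspose_smul, h.eq, Complex.star_def, Complex.conj_ofReal]

lemma psd_smul_aux {n : ℕ} {M : Matrix (Fin n) (Fin n) ℂ} (h : M.PosSemidef)
    (c : ℝ) (hc : 0 ≤ c) : ((c : ℂ) • M).PosSemidef := by
  refine ⟨herm_smul_aux h.1 c, fun x => ?_⟩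
  simpa [Finsupp.mul_sum, mul_left_comm, mul_assoc] using
    smul_nonneg (show (0 : ℂ) ≤ c by exact_mod_cast hc) (h.2 x)

lemma sq_psd {n : ℕ} {M : Matrix (Fin n) (Fin n) ℂ} (h : M.IsHermitian) :
    (M * M).PosSemidef := by
  have := Matrix.posSemidef_conjTranspose_mul_self M
  rwa [h.eq] at this

/-- CHSH / Tsirelson bound for one block. -/
lemma chsh_block {n : ℕ} (A1 A2 B1 B2 : Matrix (Fin n) (Fin n) ℂ)
    (hA1 : A1.IsHermitian) (hA2h : A2.IsHermitian)
    (hB1 : B1.IsHermitian) (hB2h : B2.IsHermitian)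
    (hA1sq : A1 * A1 = 1) (hA2sq : A2 * A2 = 1)
    (hB1sq : B1 * B1 = 1) (hB2sq : B2 * B2 = 1)
    (h11 : A1 * B1 = B1 * A1) (h12 : A1 * B2 = B2 * A1)
    (h21 : A2 * B1 = B1 * A2) (h22 : A2 * B2 = B2 * A2) :
    (((2 * Real.sqrt 2 : ℝ) : ℂ) • (1 : Matrix (Fin n) (Fin n) ℂ)
      - (A1 * B1 + A1 * B2 + A2 * B1 - A2 * B2)).PosSemidef := by
  have hc : (Real.sqrt 2) = Real.sqrt 2 := rfl
  have hcpos : 0 < Real.sqrt 2 := Real.sqrt_pos.mpr (by norm_num)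
  have hc2 : ((Real.sqrt 2 : ℝ) : ℂ) * ((Real.sqrt 2 : ℝ) : ℂ) = 2 := by
    rw [← Complex.ofReal_mul, Real.mul_self_sqrt (by norm_num)]
    norm_num
  set Y1 : Matrix (Fin n) (Fin n) ℂ := ((Real.sqrt 2 : ℝ) : ℂ) • A1 - (B1 + B2) with hY1
  set Y2 : Matrix (Fin n) (Fin n) ℂ := ((Real.sqrt 2 : ℝ) : ℂ) • A2 - (B1 - B2) with hY2
  have hY1h : Y1.IsHermitian := ((herm_smul_aux hA1 (Real.sqrt 2)).sub (hB1.add hB2h))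
  have hY2h : Y2.IsHermitian := ((herm_smul_aux hA2h (Real.sqrt 2)).sub (hB1.sub hB2h))
  have key : Y1 * Y1 + Y2 * Y2
      = (8 : ℂ) • (1 : Matrix (Fin n) (Fin n) ℂ)
        - ((2 * (Real.sqrt 2 : ℝ) : ℂ)) • (A1 * B1 + A1 * B2 + A2 * B1 - A2 * B2) := by
    rw [hY1, hY2]
    simp only [Matrix.sub_mul, Matrix.mul_sub, Matrix.add_mul, Matrix.mul_add,
      Matrix.smul_mul, Matrix.mul_smul, smul_smul, hc2,
      hA1sq, hA2sq, hB1sq, hB2sq, h11, h12, h21, h22]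
    match_scalars <;> first
      | ring1
      | linear_combination 2 * hc2
  have heq : (((2 * Real.sqrt 2 : ℝ) : ℂ) • (1 : Matrix (Fin n) (Fin n) ℂ)
      - (A1 * B1 + A1 * B2 + A2 * B1 - A2 * B2))
      = (((2 * Real.sqrt 2)⁻¹ : ℝ) : ℂ) • (Y1 * Y1 + Y2 * Y2) := by
    have hcne : ((Real.sqrt 2 : ℝ) : ℂ) ≠ 0 := by
      exact_mod_cast hcpos.ne'
    rw [key]
    match_scalars <;> push_cast <;> field_simp <;> linear_combination 4 * hc2
  rw [heq]
  exact psd_smul_aux ((sq_psd hY1h).add (sq_psd hY2h)) _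
    (by positivity)

theorem stmt16 (n : ℕ) (hn : 0 < n)
    (A : Fin 3 → Matrix (Fin n) (Fin n) ℂ) (B : Fin 6 → Matrix (Fin n) (Fin n) ℂ)
    (hAherm : ∀ x, (A x).IsHermitian) (hBherm : ∀ y, (B y).IsHermitian)
    (hA2 : ∀ x, A x * A x = 1) (hB2 : ∀ y, B y * B y = 1)
    (hcomm : ∀ x y, A x * B y = B y * A x) :
    (((6 * Real.sqrt 2 : ℝ) : ℂ) • (1 : Matrix (Fin n) (Fin n) ℂ)
      - (A 0 * B 0 + A 0 * B 1 + A 1 * B 0 - A 1 * B 1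
        + A 0 * B 2 + A 0 * B 3 - A 2 * B 2 + A 2 * B 3
        + A 1 * B 4 + A 1 * B 5 - A 2 * B 4 + A 2 * B 5)).PosSemidef := by
  have hneg_herm : (-(A 2)).IsHermitian := (hAherm 2).neg
  have hneg_sq : (-(A 2)) * (-(A 2)) = 1 := by rw [neg_mul_neg, hA2]
  have hneg_comm : ∀ y, (-(A 2)) * B y = B y * (-(A 2)) := fun y => by
    rw [neg_mul, hcomm, mul_neg]
  have h1 := chsh_block (A 0) (A 1) (B 0) (B 1) (hAherm 0) (hAherm 1) (hBherm 0)
    (hBherm 1) (hA2 0) (hA2 1) (hB2 0) (hB2 1) (hcomm 0 0) (hcomm 0 1)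
    (hcomm 1 0) (hcomm 1 1)
  have h2 := chsh_block (A 0) (-(A 2)) (B 2) (B 3) (hAherm 0) hneg_herm (hBherm 2)
    (hBherm 3) (hA2 0) hneg_sq (hB2 2) (hB2 3) (hcomm 0 2) (hcomm 0 3)
    (hneg_comm 2) (hneg_comm 3)
  have h3 := chsh_block (A 1) (-(A 2)) (B 4) (B 5) (hAherm 1) hneg_herm (hBherm 4)
    (hBherm 5) (hA2 1) hneg_sq (hB2 4) (hB2 5) (hcomm 1 4) (hcomm 1 5)
    (hneg_comm 4) (hneg_comm 5)
  have hsum := (h1.add h2).add h3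
  have hscal : ((6 * Real.sqrt 2 : ℝ) : ℂ)
      = ((2 * Real.sqrt 2 : ℝ) : ℂ) + ((2 * Real.sqrt 2 : ℝ) : ℂ)
        + ((2 * Real.sqrt 2 : ℝ) : ℂ) := by push_cast; ring
  convert hsum using 1
  rw [hscal]
  simp only [neg_mul]
  module
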